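/- arXiv:2001.05758 — 9 statements merged into one kernel-verified Lean document; each statement's English description precedes it below -/
import Mathlib

section
/- The full subcategory of the category of simplicial sets spanned by the non-singular simplicial sets is reflective: the (fully faithful) inclusion functor from the category of non-singular simplicial sets into SSet admits a left adjoint. -/
open CategoryTheory CategoryTheory.Limits Simplicial SSet

/-- The `i`-th vertex of an `n`-simplex `x`, i.e. `x · εᵢ`, where `εᵢ : [0] ⟶ [n]`
sends `0` to `i`. -/
def SSet.vertex (X : SSet) {n : ℕ} (x : X _⦋n⦌) (i : Fin (n + 1)) : X _⦋0⦌ :=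
  X.map (SimplexCategory.const ⦋0⦌ ⦋n⦌ i).op x

/-- A simplex is degenerate if it is obtained from a simplex of strictly lower degree
by the action of a (necessarily non-identity) epimorphism of the simplex category. -/
def SSet.IsDegenerate (X : SSet) {n : ℕ} (x : X _⦋n⦌) : Prop :=
  ∃ (m : ℕ) (_ : m < n) (σ : (⦋n⦌ : SimplexCategory) ⟶ ⦋m⦌) (y : X _⦋m⦌),
    Epi σ ∧ x = X.map σ.op y

/-- A simplicial set is non-singular if the representing map of each of its
non-degenerate simplices is a monomorphism. -/
def SSet.NonSingular (X : SSet) : Prop :=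
  ∀ (n : ℕ) (x : X _⦋n⦌), ¬ X.IsDegenerate x → Mono ((SSet.yonedaEquiv (X := X) (n := ⦋n⦌)).symm x)

/-- The relation `≈ₓ` on `Fin (n + 1)`: `i ≈ₓ k` iff there exists `j` with
`i ≤ k`, `k ≤ j` and `x·εᵢ = x·εⱼ`. -/
def SSet.approxRel (X : SSet) {n : ℕ} (x : X _⦋n⦌) (i k : Fin (n + 1)) : Prop :=
  ∃ j, i ≤ k ∧ k ≤ j ∧ X.vertex x i = X.vertex x j

/-- The equivalence relation `Rₓ` generated by `≈ₓ`. -/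
def SSet.vertexRel (X : SSet) {n : ℕ} (x : X _⦋n⦌) : Fin (n + 1) → Fin (n + 1) → Prop :=
  Relation.EqvGen (X.approxRel x)

namespace NSAux

universe u

/-- vertex of a pulled-back simplex -/
lemma vertex_map (X : SSet.{u}) {n m : ℕ} (τ : (⦋n⦌ : SimplexCategory) ⟶ ⦋m⦌) (w : X _⦋m⦌)
    (i : Fin (n + 1)) : X.vertex (X.map τ.op w) i = X.vertex w (τ.toOrderHom i) := by
  dsimp [SSet.vertex]
  rw [← FunctorToTypes.map_comp_apply, ← op_comp, SimplexCategory.const_comp]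

lemma vertex_natural {X Y : SSet.{u}} (f : X ⟶ Y) {n : ℕ} (x : X _⦋n⦌) (i : Fin (n + 1)) :
    Y.vertex (f.app _ x) i = f.app _ (X.vertex x i) := by
  dsimp [SSet.vertex]
  rw [← FunctorToTypes.naturality]

/-- Weak Eilenberg–Zilber: every simplex is a degeneracy of a non-degenerate simplex. -/
lemma exists_nondeg (X : SSet.{u}) : ∀ (n : ℕ) (z : X _⦋n⦌),
    ∃ (m : ℕ) (τ : (⦋n⦌ : SimplexCategory) ⟶ ⦋m⦌) (w : X _⦋m⦌),
      Epi τ ∧ ¬ X.IsDegenerate w ∧ z = X.map τ.op w := by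
  intro n
  induction n using Nat.strong_induction_on with
  | _ n IH =>
    intro z
    by_cases hz : X.IsDegenerate z
    · obtain ⟨m, hm, σ, y, hσ, hy⟩ := hz
      obtain ⟨m', τ', w, hτ', hw, hw'⟩ := IH m hm y
      refine ⟨m', σ ≫ τ', w, ?_, hw, ?_⟩
      · exact @epi_comp _ _ _ _ _ _ hσ _ hτ'
      · rw [hy, hw', op_comp, FunctorToTypes.map_comp_apply]
    · exact ⟨n, 𝟙 _, z, inferInstance, hz, by simp⟩

lemma yonedaEquiv_symm_app (X : SSet.{u}) {n : ℕ} (x : X _⦋n⦌) (m : SimplexCategoryᵒᵖ)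
    (g : Δ[n].obj m) : ((SSet.yonedaEquiv (X := X) (n := ⦋n⦌)).symm x).app m g = X.map g.down.op x := rfl

/-- In a non-singular simplicial set, the vertices of a non-degenerate simplex are distinct. -/
lemma vertex_inj {X : SSet.{u}} (hX : X.NonSingular) {n : ℕ} (w : X _⦋n⦌)
    (hw : ¬ X.IsDegenerate w) : Function.Injective (X.vertex w) := by
  have hm : Mono ((SSet.yonedaEquiv (X := X) (n := ⦋n⦌)).symm w) := hX n w hw
  have h0 : Mono (((SSet.yonedaEquiv (X := X) (n := ⦋n⦌)).symm w).app (Opposite.op ⦋0⦌)) :=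
    (NatTrans.mono_iff_mono_app _).mp hm _
  rw [CategoryTheory.mono_iff_injective] at h0
  intro i j hij
  have : (ULift.up (SimplexCategory.const ⦋0⦌ ⦋n⦌ i) : Δ[n].obj (Opposite.op ⦋0⦌)) =
      ULift.up (SimplexCategory.const ⦋0⦌ ⦋n⦌ j) := h0 hij
  have := congrArg (fun g => (ULift.down g).toOrderHom 0) this
  simpa using this

/-- Vertex injectivity implies that the representing map is mono. -/
lemma mono_of_vertex_inj (X : SSet.{u}) {n : ℕ} (x : X _⦋n⦌)
    (h : Function.Injective (X.vertex x)) : Mono ((SSet.yonedaEquiv (X := X) (n := ⦋n⦌)).symm x) := by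
  rw [NatTrans.mono_iff_mono_app]
  intro k
  rw [CategoryTheory.mono_iff_injective]
  intro u v huv
  rw [yonedaEquiv_symm_app, yonedaEquiv_symm_app] at huv
  rcases u with ⟨u⟩
  rcases v with ⟨v⟩
  congr 1
  apply SimplexCategory.Hom.ext
  apply OrderHom.ext
  funext t
  apply h
  dsimp [SSet.vertex]
  have h1 : ∀ g : k.unop ⟶ ⦋n⦌, X.map (SimplexCategory.const ⦋0⦌ ⦋n⦌ (g.toOrderHom t)).op x
      = X.map (SimplexCategory.const ⦋0⦌ k.unop t).op (X.map g.op x) := by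
    intro g
    rw [← FunctorToTypes.map_comp_apply, ← op_comp, SimplexCategory.const_comp]
  exact (h1 u).trans (((congrArg (X.map (⦋0⦌.const k.unop t).op) huv)).trans (h1 v).symm)

lemma fix_or_collapse {n : ℕ} (a : Fin (n + 1)) (i : Fin (n + 2)) :
    (SimplexCategory.δ a.succ).toOrderHom ((SimplexCategory.σ a).toOrderHom i) = i ∨
      (i = a.succ ∧
        (SimplexCategory.δ a.succ).toOrderHom ((SimplexCategory.σ a).toOrderHom i) =
          a.castSucc) := by
  have he : (SimplexCategory.δ a.succ).toOrderHom ((SimplexCategory.σ a).toOrderHom i) =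
      a.succ.succAbove (a.predAbove i) := rfl
  rw [he]
  unfold Fin.predAbove Fin.succAbove
  split_ifs with h1 h2 h3
  · right
    constructor <;> (ext; simp [Fin.lt_def, Fin.le_def] at h1 h2 ⊢ <;> omega)
  · left; ext; simp [Fin.lt_def, Fin.le_def] at h1 h2 ⊢ <;> omega
  · left; ext; simp [Fin.lt_def, Fin.le_def] at h1 h3 ⊢ <;> omega
  · left; ext; simp [Fin.lt_def, Fin.le_def] at h1 h3 ⊢ <;> omega

/-- Key collapse lemma: consecutive equal vertices force a degeneracy. -/
lemma collapse {X : SSet.{u}} (hX : X.NonSingular) {n : ℕ} (z : X _⦋n + 1⦌) (a : Fin (n + 1))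
    (h : X.vertex z a.castSucc = X.vertex z a.succ) :
    z = X.map (SimplexCategory.σ a).op (X.map (SimplexCategory.δ a.succ).op z) := by
  obtain ⟨m, τ, w, hτ, hw, hzw⟩ := exists_nondeg X (n + 1) z
  have hττ : τ.toOrderHom a.castSucc = τ.toOrderHom a.succ := by
    apply vertex_inj hX w hw
    rw [← vertex_map, ← vertex_map, ← hzw]
    exact h
  have hcomp : (SimplexCategory.σ a ≫ SimplexCategory.δ a.succ) ≫ τ = τ := by
    apply SimplexCategory.Hom.ext
    apply OrderHom.ext
    funext i
    rcases fix_or_collapse a i with hi | ⟨hi1, hi2⟩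
    · exact congrArg τ.toOrderHom hi
    · show τ.toOrderHom ((SimplexCategory.δ a.succ).toOrderHom
        ((SimplexCategory.σ a).toOrderHom i)) = τ.toOrderHom i
      rw [hi2, hi1, hττ]
  conv_lhs => rw [hzw, ← hcomp]
  rw [op_comp, op_comp, FunctorToTypes.map_comp_apply, FunctorToTypes.map_comp_apply, ← hzw]

/-- Between two equal vertices, all vertices are equal. -/
lemma vertex_between {X : SSet.{u}} (hX : X.NonSingular) {n : ℕ} (z : X _⦋n⦌)
    {i k j : Fin (n + 1)} (hik : i ≤ k) (hkj : k ≤ j)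
    (h : X.vertex z i = X.vertex z j) : X.vertex z i = X.vertex z k := by
  obtain ⟨m, τ, w, hτ, hw, hzw⟩ := exists_nondeg X n z
  subst hzw
  rw [vertex_map, vertex_map] at h ⊢
  have hinj := vertex_inj hX w hw
  have hij : τ.toOrderHom i = τ.toOrderHom j := hinj h
  have h1 := τ.toOrderHom.monotone hik
  have h2 := τ.toOrderHom.monotone hkj
  rw [le_antisymm h1 (hij ▸ h2)]

/-- Elements of a limit simplicial set are determined by their components. -/
lemma limit_inj {J : Type u} [Category.{u} J] {F : J ⥤ SSet.{u}} {c : Cone F} (hc : IsLimit c)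
    (k : SimplexCategoryᵒᵖ) {u v : c.pt.obj k}
    (h : ∀ j, (c.π.app j).app k u = (c.π.app j).app k v) : u = v := by
  have hk : IsLimit (((evaluation SimplexCategoryᵒᵖ (Type u)).obj k).mapCone c) :=
    isLimitOfPreserves ((evaluation SimplexCategoryᵒᵖ (Type u)).obj k) hc
  apply (Types.isLimitEquivSections hk).injective
  apply Subtype.ext
  funext j
  exact h j

/-- Non-singularity is closed under limits. -/
lemma closed (J : Type u) [Category.{u} J] : ∀ (F : J ⥤ SSet.{u}) (c : Cone F), IsLimit c →
    (∀ j, (F.obj j).NonSingular) → c.pt.NonSingular := by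
  intro F c hc hF
  intro n x hx
  apply mono_of_vertex_inj
  have key : ∀ p q : Fin (n + 1), p < q → c.pt.vertex x p = c.pt.vertex x q → False := by
    intro p q hpq hv
    match n, x, p, q, hpq, hv with
    | 0, x, p, q, hpq, hv =>
      have h0 := p.isLt
      have h1 := q.isLt
      rw [Fin.lt_def] at hpq
      omega
    | n + 1, x, p, q, hpq, hv =>
      have hx : ¬ c.pt.IsDegenerate x := hx
      have hplast : p ≠ Fin.last (n + 1) := by
        intro hp
        rw [Fin.lt_def, hp] at hpq
        have := q.isLt
        simp [Fin.last] at hpq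
        omega
      set a : Fin (n + 1) := p.castPred hplast with ha
      have hap : a.castSucc = p := Fin.castSucc_castPred p hplast
      have haq : a.succ ≤ q := by
        rw [Fin.le_def, Fin.val_succ]
        have h' : a.castSucc.val = p.val := congrArg Fin.val hap
        rw [Fin.coe_castSucc] at h'
        rw [Fin.lt_def] at hpq
        omega
      have hcomp : ∀ j, (c.π.app j).app _
          (c.pt.map (SimplexCategory.σ a).op (c.pt.map (SimplexCategory.δ a.succ).op x))
          = (c.π.app j).app _ x := by
        intro j
        have n1 : ∀ {k k' : SimplexCategoryᵒᵖ} (f : k ⟶ k') (y : c.pt.obj k),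
            (c.π.app j).app k' (c.pt.map f y) = (F.obj j).map f ((c.π.app j).app k y) :=
          fun f y => FunctorToTypes.naturality (c.π.app j) f y
        set z := (c.π.app j).app _ x with hz
        have hvz : (F.obj j).vertex z a.castSucc = (F.obj j).vertex z a.succ := by
          rw [hap]
          have h1 : (F.obj j).vertex z p = (F.obj j).vertex z q := by
            rw [hz, vertex_natural, vertex_natural]
            exact congrArg _ hv
          exact vertex_between (hF j) z (le_of_lt (hap ▸ Fin.castSucc_lt_succ (i := a))) haq h1
        have hcol := collapse (hF j) z a hvz
        exact ((n1 _ _).trans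
          (congrArg ((F.obj j).map (SimplexCategory.σ a).op) (n1 _ _))).trans hcol.symm
      have heq := limit_inj hc _ (fun j => hcomp j)
      exact hx ⟨n, Nat.lt_succ_self _, SimplexCategory.σ a,
        c.pt.map (SimplexCategory.δ a.succ).op x, inferInstance, heq.symm⟩
  intro p q hpq
  by_contra hne
  rcases Ne.lt_or_gt hne with h | h
  · exact key p q h hpq
  · exact key q p h hpq.symm

lemma closed_inst (J : Type u) [Category.{u} J] :
    ObjectProperty.IsClosedUnderLimitsOfShape (C := SSet.{u}) SSet.NonSingular J :=
  ⟨fun X ⟨p⟩ => closed J p.diag ⟨X, p.π⟩ p.isLimit p.prop_diag_obj⟩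

/-- A simplicial set admitting a levelwise-injective map to a non-singular simplicial set
is non-singular. -/
lemma nonsingular_of_mono {Q Z : SSet.{u}} (m : Q ⟶ Z)
    (hinj : ∀ k, Function.Injective (m.app k))
    (hZ : Z.NonSingular) : Q.NonSingular := by
  intro n x hx
  have hmx : ¬ Z.IsDegenerate (m.app _ x) := by
    rintro ⟨k, hk, σ, y, hσ, hy⟩
    have hse : IsSplitEpi σ := by
      have := hσ
      exact isSplitEpi_of_epi σ
    have hsec : section_ σ ≫ σ = 𝟙 _ := IsSplitEpi.id σ
    have hy' : Z.map (section_ σ).op (m.app _ x) = y := by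
      rw [hy, ← FunctorToTypes.map_comp_apply, ← op_comp, hsec, op_id,
        FunctorToTypes.map_id_apply]
    have heq : m.app _ (Q.map σ.op (Q.map (section_ σ).op x)) = m.app _ x := by
      rw [FunctorToTypes.naturality, FunctorToTypes.naturality, hy', ← hy]
    exact hx ⟨k, hk, σ, Q.map (section_ σ).op x, hσ, (hinj _ heq).symm⟩
  apply mono_of_vertex_inj
  intro i j hij
  apply vertex_inj hZ _ hmx
  rw [vertex_natural, vertex_natural, hij]

/-- Quotient data on a simplicial set: a compatible family of setoids. -/
structure QuotData (A : SSet.{u}) : Type u where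
  rel : ∀ n : SimplexCategoryᵒᵖ, Setoid (A.obj n)
  compat : ∀ {n m : SimplexCategoryᵒᵖ} (f : n ⟶ m) (a b : A.obj n),
    (rel n).r a b → (rel m).r (A.map f a) (A.map f b)

/-- The quotient simplicial set. -/
def QuotData.sset {A : SSet.{u}} (d : QuotData A) : SSet.{u} where
  obj n := Quotient (d.rel n)
  map {n m} f := TypeCat.ofHom (Quotient.map' (A.map f) (fun a b h => d.compat f a b h))
  map_id n := by
    ext x
    induction x using Quotient.inductionOn with
    | h a => simp [Quotient.map'_mk'']
  map_comp {n m k} f g := by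
    ext x
    induction x using Quotient.inductionOn with
    | h a => simp [Quotient.map'_mk'']

/-- The projection onto the quotient. -/
def QuotData.proj {A : SSet.{u}} (d : QuotData A) : A ⟶ d.sset where
  app n := TypeCat.ofHom (fun a => Quotient.mk'' a)
  naturality n m f := rfl

/-- The quotient data induced by a morphism. -/
def kerData {A Z : SSet.{u}} (h : A ⟶ Z) : QuotData A where
  rel n := Setoid.ker (h.app n)
  compat {n m} f a b hab := by
    have h1 := FunctorToTypes.naturality h f a
    have h2 := FunctorToTypes.naturality h f b
    show h.app m (A.map f a) = h.app m (A.map f b)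
    rw [h1, h2]
    exact congrArg (Z.map f) hab

/-- The induced map from the kernel quotient. -/
def kerDesc {A Z : SSet.{u}} (h : A ⟶ Z) : (kerData h).sset ⟶ Z where
  app n := TypeCat.ofHom (Quotient.lift (h.app n) (fun a b hab => by exact hab))
  naturality n m f := by
    ext x
    induction x using Quotient.inductionOn with
    | h a => exact FunctorToTypes.naturality h f a

lemma kerDesc_inj {A Z : SSet.{u}} (h : A ⟶ Z) (k : SimplexCategoryᵒᵖ) :
    Function.Injective ((kerDesc h).app k) := by
  intro u v
  refine Quotient.inductionOn₂ u v ?_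
  intro a b hab
  exact Quotient.sound (by exact hab)

lemma solution_set :
    SolutionSetCondition.{u} (ObjectProperty.ι SSet.NonSingular.{u}) := by
  intro A
  refine ⟨{d : QuotData A // d.sset.NonSingular}, fun i => ⟨i.1.sset, i.2⟩,
    fun i => i.1.proj, ?_⟩
  intro X h
  have hns : (kerData h).sset.NonSingular :=
    nonsingular_of_mono (kerDesc h) (kerDesc_inj h) X.property
  refine ⟨⟨kerData h, hns⟩, ObjectProperty.homMk (kerDesc h), ?_⟩
  ext k a
  rfl

end NSAux

/-- The full subcategory of `SSet` spanned by the non-singular simplicial sets is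
reflective: the fully faithful inclusion admits a left adjoint. -/
theorem nonsingular_reflective :
    (ObjectProperty.ι SSet.NonSingular).IsRightAdjoint := by
  refine @isRightAdjoint_of_preservesLimits_of_solutionSetCondition _ _ _ _ _ ?_ ?_
    NSAux.solution_set
  · exact ⟨fun J _ => by
      haveI := NSAux.closed_inst J
      infer_instance⟩
  · exact ⟨fun {J} _ => by
      haveI := NSAux.closed_inst J
      infer_instance⟩
end

section
/- For every simplicial set X there exist a non-singular simplicial set DX and a simplicial map η : X ⟶ DX that is surjective in every degree, such that every simplicial map from X to a non-singular simplicial set factors uniquely through η: for every non-singular simplicial set A and every simplicial map k : X ⟶ A there is a unique map k̄ : DX ⟶ A with k = k̄ ∘ η. -/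
open CategoryTheory CategoryTheory.Limits Simplicial SSet

namespace Desing
open SimplexCategory

lemma map_map (X : SSet) {a b c : SimplexCategory} (f : a ⟶ b) (g : b ⟶ c)
    (x : X.obj (Opposite.op c)) :
    X.map f.op (X.map g.op x) = X.map (f ≫ g).op x := by
  rw [op_comp, FunctorToTypes.map_comp_apply]

lemma vertex_map (X : SSet) {m' : SimplexCategory} {n : ℕ} (g : m' ⟶ ⦋n⦌) (x : X _⦋n⦌)
    (l : Fin (m'.len + 1)) :
    X.map (const ⦋0⦌ m' l).op (X.map g.op x) = X.vertex x (g.toOrderHom l) := by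
  rw [map_map, SimplexCategory.const_comp]
  rfl

/-- The monotone surjection collapsing the interval `[i, j]` to the point `i`. -/
def σmap (n : ℕ) (i j : Fin (n + 1)) (h : i.1 ≤ j.1) : (⦋n⦌ : SimplexCategory) ⟶ ⦋n - ((j : ℕ) - i)⦌ :=
  Hom.mk ⟨fun l => ⟨min l.1 i.1 + (l.1 - j.1), by
      have := l.isLt; have := i.isLt; have := j.isLt
      simp only [len_mk] at *; omega⟩,
    fun a b hab => by
      simp only [Fin.mk_le_mk]
      have : a.1 ≤ b.1 := hab
      omega⟩

/-- A monotone section of `σmap`. -/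
def δmap (n : ℕ) (i j : Fin (n + 1)) (h : i.1 ≤ j.1) :
    (⦋n - ((j : ℕ) - i)⦌ : SimplexCategory) ⟶ ⦋n⦌ :=
  Hom.mk ⟨fun p => ⟨if p.1 ≤ i.1 then p.1 else p.1 + (j.1 - i.1), by
      have := p.isLt; have := j.isLt
      simp only [len_mk] at *; split <;> omega⟩,
    fun a b hab => by
      have : a.1 ≤ b.1 := hab
      simp only [Fin.mk_le_mk]
      split <;> split <;> omega⟩

lemma delta_comp_sigma (n : ℕ) (i j : Fin (n + 1)) (h : i.1 ≤ j.1) :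
    δmap n i j h ≫ σmap n i j h = 𝟙 _ := by
  apply Hom.ext
  apply OrderHom.ext
  funext p
  have hp : (p : ℕ) < n - ((j : ℕ) - i) + 1 := by simpa [len_mk] using p.isLt
  have hj : (j : ℕ) < n + 1 := j.isLt
  apply Fin.ext
  simp only [comp_toOrderHom, δmap, σmap, Hom.toOrderHom_mk, OrderHom.comp_coe,
    OrderHom.coe_mk, Function.comp_apply, id_toOrderHom, OrderHom.id_coe, id_eq]
  dsimp only [DFunLike.coe] at *; split_ifs <;> omega

lemma epi_sigma (n : ℕ) (i j : Fin (n + 1)) (h : i.1 ≤ j.1) : Epi (σmap n i j h) := by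
  haveI : IsSplitEpi (σmap n i j h) := IsSplitEpi.mk' ⟨δmap n i j h, delta_comp_sigma n i j h⟩
  infer_instance

lemma sigma_delta_fix {n : ℕ} {m' : SimplexCategory} (i j : Fin (n + 1)) (h : i.1 ≤ j.1)
    (τ : (⦋n⦌ : SimplexCategory) ⟶ m') (hτ : τ.toOrderHom i = τ.toOrderHom j) :
    (σmap n i j h ≫ δmap n i j h) ≫ τ = τ := by
  apply Hom.ext
  apply OrderHom.ext
  funext l
  have hl := l.isLt
  have hjl := j.isLt
  simp only [comp_toOrderHom, OrderHom.comp_coe, Function.comp_apply]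
  rcases le_or_gt l.1 i.1 with h1 | h1
  · congr 1
    apply Fin.ext
    simp only [σmap, δmap, Hom.toOrderHom_mk, OrderHom.coe_mk, len_mk] at *
    dsimp only [DFunLike.coe] at *; split_ifs <;> omega
  · rcases le_or_gt l.1 j.1 with h2 | h2
    · have hd : (δmap n i j h).toOrderHom ((σmap n i j h).toOrderHom l) = i := by
        apply Fin.ext
        simp only [σmap, δmap, Hom.toOrderHom_mk, OrderHom.coe_mk, len_mk] at *
        dsimp only [DFunLike.coe] at *; split_ifs <;> omega
      rw [hd]
      apply le_antisymm
      · exact τ.toOrderHom.monotone (by rw [Fin.le_def]; exact le_of_lt h1)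
      · rw [hτ]
        exact τ.toOrderHom.monotone (by rw [Fin.le_def]; exact h2)
    · congr 1
      apply Fin.ext
      simp only [σmap, δmap, Hom.toOrderHom_mk, OrderHom.coe_mk, len_mk] at *
      dsimp only [DFunLike.coe] at *; split_ifs <;> omega


/-- Eilenberg–Zilber light: every simplex is the image of a non-degenerate simplex
under an epimorphism. -/
lemma exists_epi_nondeg (A : SSet) : ∀ (n : ℕ) (z : A _⦋n⦌),
    ∃ (m : ℕ) (τ : (⦋n⦌ : SimplexCategory) ⟶ ⦋m⦌) (y : A _⦋m⦌),
      Epi τ ∧ ¬ A.IsDegenerate y ∧ z = A.map τ.op y := by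
  intro n
  induction n using Nat.strong_induction_on with
  | _ n ih =>
    intro z
    by_cases hz : A.IsDegenerate z
    · obtain ⟨m, hm, σ, y, hσ, hzy⟩ := hz
      obtain ⟨m', τ', y', hτ', hy', hyy⟩ := ih m hm y
      haveI := hσ; haveI := hτ'
      refine ⟨m', σ ≫ τ', y', inferInstance, hy', ?_⟩
      rw [hzy, hyy]
      exact map_map A σ τ' y'
    · exact ⟨n, 𝟙 _, z, inferInstance, hz, by simp⟩

lemma vertex_inj {A : SSet} (hA : A.NonSingular) {n : ℕ} {y : A _⦋n⦌}
    (hy : ¬ A.IsDegenerate y) : Function.Injective (A.vertex y) := by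
  have hm := hA n y hy
  rw [NatTrans.mono_iff_mono_app] at hm
  have h0 := hm (Opposite.op ⦋0⦌)
  rw [CategoryTheory.mono_iff_injective] at h0
  intro a b hab
  have key : ∀ c : Fin (n + 1),
      ((SSet.yonedaEquiv (X := A) (n := ⦋n⦌)).symm y).app (Opposite.op ⦋0⦌)
        ((stdSimplex.objEquiv (n := ⦋n⦌) (m := Opposite.op ⦋0⦌)).symm (const ⦋0⦌ ⦋n⦌ c))
        = A.vertex y c := fun c => rfl
  have h1 := h0 (a₁ := (stdSimplex.objEquiv (n := ⦋n⦌) (m := Opposite.op ⦋0⦌)).symm (const ⦋0⦌ ⦋n⦌ a))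
      (a₂ := (stdSimplex.objEquiv (n := ⦋n⦌) (m := Opposite.op ⦋0⦌)).symm (const ⦋0⦌ ⦋n⦌ b))
      (by rw [key a, key b]; exact hab)
  have h2 : const ⦋0⦌ ⦋n⦌ a = const ⦋0⦌ ⦋n⦌ b :=
    (stdSimplex.objEquiv (n := ⦋n⦌) (m := Opposite.op ⦋0⦌)).symm.injective h1
  have : (const ⦋0⦌ ⦋n⦌ a).toOrderHom 0 = (const ⦋0⦌ ⦋n⦌ b).toOrderHom 0 := by rw [h2]
  simpa using this

lemma mono_of_vertex_inj {X : SSet} {n : ℕ} {x : X _⦋n⦌}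
    (h : Function.Injective (X.vertex x)) : Mono ((SSet.yonedaEquiv (X := X) (n := ⦋n⦌)).symm x) := by
  rw [NatTrans.mono_iff_mono_app]
  intro m
  rw [CategoryTheory.mono_iff_injective]
  intro g₁ g₂ hg
  apply (stdSimplex.objEquiv (n := ⦋n⦌) (m := m)).injective
  have hg' : X.map (stdSimplex.objEquiv (n := ⦋n⦌) (m := m) g₁).op x
      = X.map (stdSimplex.objEquiv (n := ⦋n⦌) (m := m) g₂).op x := hg
  apply Hom.ext
  apply OrderHom.ext
  funext l
  apply h
  rw [← vertex_map X (stdSimplex.objEquiv (n := ⦋n⦌) (m := m) g₁) x l,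
    ← vertex_map X (stdSimplex.objEquiv (n := ⦋n⦌) (m := m) g₂) x l, hg']

/-- Two simplices are related iff they are identified by every map to a
non-singular simplicial set. -/
def rel (X : SSet) (U : SimplexCategoryᵒᵖ) (a b : X.obj U) : Prop :=
  ∀ (A : SSet), A.NonSingular → ∀ k : X ⟶ A, k.app U a = k.app U b

lemma rel_equiv (X : SSet) (U : SimplexCategoryᵒᵖ) : Equivalence (rel X U) :=
  ⟨fun _ _ _ _ => rfl, fun h A hA k => (h A hA k).symm,
    fun h1 h2 A hA k => (h1 A hA k).trans (h2 A hA k)⟩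

/-- The desingularization, as a degreewise quotient. -/
def DX (X : SSet) : SSet where
  obj U := Quot (rel X U)
  map {U V} f := TypeCat.ofHom (Quot.map (X.map f) (fun a b hab A hA k => by
    rw [FunctorToTypes.naturality, FunctorToTypes.naturality, hab A hA k]))
  map_id U := by
    ext q
    obtain ⟨a, rfl⟩ := Quot.exists_rep q
    show Quot.mk _ (X.map (𝟙 U) a) = Quot.mk _ a
    rw [FunctorToTypes.map_id_apply]
  map_comp {U V W} f g := by
    ext q
    obtain ⟨a, rfl⟩ := Quot.exists_rep q
    show Quot.mk _ (X.map (f ≫ g) a) = Quot.mk _ (X.map g (X.map f a))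
    rw [FunctorToTypes.map_comp_apply]

/-- The canonical projection onto the desingularization. -/
def eta (X : SSet) : X ⟶ DX X where
  app U := TypeCat.ofHom (Quot.mk _)
  naturality U V f := rfl

lemma deg_of_vertex_eq (X : SSet) {n : ℕ} (q : (DX X) _⦋n⦌) (i j : Fin (n + 1))
    (hij : i < j) (hv : (DX X).vertex q i = (DX X).vertex q j) :
    (DX X).IsDegenerate q := by
  obtain ⟨x, rfl⟩ := Quot.exists_rep q
  have h : (i : ℕ) ≤ j := le_of_lt hij
  have hrel : rel X (Opposite.op ⦋0⦌) (X.vertex x i) (X.vertex x j) :=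
    ((rel_equiv X _).eqvGen_iff).mp (Quot.eq.mp hv)
  have claim : rel X (Opposite.op ⦋n⦌) x
      (X.map (σmap n i j h).op (X.map (δmap n i j h).op x)) := by
    intro A hA k
    have hnat : ∀ c : Fin (n + 1),
        A.vertex (k.app (Opposite.op ⦋n⦌) x) c = k.app (Opposite.op ⦋0⦌) (X.vertex x c) :=
      fun c => (NatTrans.naturality_apply k (const ⦋0⦌ ⦋n⦌ c).op x).symm
    have h1 : A.vertex (k.app (Opposite.op ⦋n⦌) x) i
        = A.vertex (k.app (Opposite.op ⦋n⦌) x) j := by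
      rw [hnat i, hnat j]; exact hrel A hA k
    obtain ⟨m', τ, y', hτ, hy', hzy⟩ := exists_epi_nondeg A n (k.app (Opposite.op ⦋n⦌) x)
    have hvert : ∀ c : Fin (n + 1),
        A.vertex (k.app (Opposite.op ⦋n⦌) x) c = A.vertex y' (τ.toOrderHom c) := fun c => by
      rw [hzy]; exact vertex_map A τ y' c
    have hvi : τ.toOrderHom i = τ.toOrderHom j := by
      apply vertex_inj hA hy'
      rw [← hvert i, ← hvert j]; exact h1
    have hfix := sigma_delta_fix i j h τ hvi
    calc k.app (Opposite.op ⦋n⦌) x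
        = A.map τ.op y' := hzy
      _ = A.map ((σmap n i j h ≫ δmap n i j h) ≫ τ).op y' := by rw [hfix]
      _ = A.map (σmap n i j h ≫ δmap n i j h).op (A.map τ.op y') :=
          (map_map A _ τ y').symm
      _ = A.map (σmap n i j h).op (A.map (δmap n i j h).op (A.map τ.op y')) :=
          (map_map A _ _ _).symm
      _ = A.map (σmap n i j h).op (A.map (δmap n i j h).op (k.app (Opposite.op ⦋n⦌) x)) := by
          rw [← hzy]
      _ = k.app (Opposite.op ⦋n⦌) (X.map (σmap n i j h).op (X.map (δmap n i j h).op x)) := by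
          rw [FunctorToTypes.naturality, FunctorToTypes.naturality]
  refine ⟨n - ((j : ℕ) - i), ?_, σmap n i j h, Quot.mk _ (X.map (δmap n i j h).op x),
    epi_sigma n i j h, ?_⟩
  · have := j.isLt; omega
  · exact Quot.sound claim

lemma nonsingular_DX (X : SSet) : (DX X).NonSingular := by
  intro n q hq
  apply mono_of_vertex_inj
  intro i j hv
  by_contra hne
  rcases lt_or_gt_of_ne hne with hlt | hlt
  · exact hq (deg_of_vertex_eq X q i j hlt hv)
  · exact hq (deg_of_vertex_eq X q j i hlt hv.symm)

end Desing

/-- For every simplicial set `X` there is a degreewise surjective map `η : X ⟶ DX`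
to a non-singular simplicial set through which every map from `X` to a non-singular
simplicial set factors uniquely. -/
theorem exists_desingularization (X : SSet) :
    ∃ (DX : SSet) (η : X ⟶ DX), DX.NonSingular ∧ (∀ n, Function.Surjective (η.app n)) ∧
      ∀ (A : SSet), A.NonSingular → ∀ k : X ⟶ A, ∃! kbar : DX ⟶ A, k = η ≫ kbar := by
  refine ⟨Desing.DX X, Desing.eta X, Desing.nonsingular_DX X, fun n q => Quot.exists_rep q, ?_⟩
  intro A hA k
  refine ⟨{ app := fun U => TypeCat.ofHom (Quot.lift (k.app U) (fun a b hab => hab A hA k))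
            naturality := fun U V f => ?_ }, ?_, ?_⟩
  · ext q
    obtain ⟨a, rfl⟩ := Quot.exists_rep q
    exact NatTrans.naturality_apply k f a
  · apply SSet.hom_ext
    intro U
    ext a
    rfl
  · intro kb hkb
    apply SSet.hom_ext
    intro U
    ext q
    obtain ⟨a, rfl⟩ := Quot.exists_rep q
    exact (congrArg (fun t => t.app U a) hkb).symm
end

section
/- The full subcategory of SSet spanned by the non-singular simplicial sets is bicomplete: it has all small limits and all small colimits. -/
open CategoryTheory CategoryTheory.Limits Simplicial SSet

namespace NSTest

universe u

open SimplexCategory Opposite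

lemma vertex_map (X : SSet.{u}) {n m : ℕ} (σ : (⦋n⦌ : SimplexCategory) ⟶ ⦋m⦌) (y : X _⦋m⦌)
    (i : Fin (n + 1)) :
    X.vertex (X.map σ.op y) i = X.vertex y (σ.toOrderHom i) := by
  dsimp [SSet.vertex]
  rw [← FunctorToTypes.map_comp_apply, ← op_comp, SimplexCategory.const_comp]

lemma vertex_naturality {X Y : SSet.{u}} (f : X ⟶ Y) {n : ℕ} (x : X _⦋n⦌) (i : Fin (n + 1)) :
    Y.vertex (f.app (op ⦋n⦌) x) i = f.app (op ⦋0⦌) (X.vertex x i) :=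
  (NatTrans.naturality_apply f _ x).symm

lemma repr_app (X : SSet.{u}) {n : ℕ} (x : X _⦋n⦌) (m : SimplexCategoryᵒᵖ)
    (f : Δ[n].obj m) :
    ((SSet.yonedaEquiv (X := X) (n := ⦋n⦌)).symm x).app m f = X.map (f.down).op x := rfl


lemma vertex_injective_of_mono (X : SSet.{u}) {n : ℕ} (x : X _⦋n⦌)
    (h : Mono ((SSet.yonedaEquiv (X := X) (n := ⦋n⦌)).symm x)) :
    Function.Injective (X.vertex x) := by
  intro i j hij
  have h0 : Mono (((SSet.yonedaEquiv (X := X) (n := ⦋n⦌)).symm x).app (op ⦋0⦌)) :=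
    (NatTrans.mono_iff_mono_app _).1 h _
  rw [CategoryTheory.mono_iff_injective] at h0
  have hc : (ULift.up (SimplexCategory.const ⦋0⦌ ⦋n⦌ i) : Δ[n].obj (op ⦋0⦌)) =
      ULift.up (SimplexCategory.const ⦋0⦌ ⦋n⦌ j) := h0 hij
  have := congrArg (fun g => (ULift.down g).toOrderHom 0) hc
  simpa [SimplexCategory.const] using this

lemma exists_nondeg (X : SSet.{u}) : ∀ (n : ℕ) (x : X _⦋n⦌),
    ∃ (m : ℕ) (σ : (⦋n⦌ : SimplexCategory) ⟶ ⦋m⦌) (y : X _⦋m⦌),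
      Epi σ ∧ ¬ X.IsDegenerate y ∧ x = X.map σ.op y := by
  intro n
  induction n using Nat.strong_induction_on with
  | _ n ih =>
    intro x
    by_cases hx : X.IsDegenerate x
    · obtain ⟨m, hm, σ, y, hσ, rfl⟩ := hx
      obtain ⟨m', σ', y', h1, h2, rfl⟩ := ih m hm y
      haveI := hσ; haveI := h1
      exact ⟨m', σ ≫ σ', y', epi_comp σ σ', h2, by
        rw [op_comp, FunctorToTypes.map_comp_apply]⟩
    · exact ⟨n, 𝟙 _, x, inferInstance, hx, by simp⟩

lemma mono_of_vertex_injective (X : SSet.{u}) {n : ℕ} (x : X _⦋n⦌)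
    (h : Function.Injective (X.vertex x)) :
    Mono ((SSet.yonedaEquiv (X := X) (n := ⦋n⦌)).symm x) := by
  have happ : ∀ m, Mono (((SSet.yonedaEquiv (X := X) (n := ⦋n⦌)).symm x).app m) := by
    intro m
    rw [CategoryTheory.mono_iff_injective]
    intro f g hfg
    have e : ∀ (t : m.unop ⟶ ⦋n⦌) (k : Fin (m.unop.len + 1)),
        X.vertex x (t.toOrderHom k) = X.map (SimplexCategory.const ⦋0⦌ m.unop k).op (X.map t.op x) := by
      intro t k
      dsimp [SSet.vertex]
      rw [← FunctorToTypes.map_comp_apply, ← op_comp, SimplexCategory.const_comp]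
    have hd : f.down = g.down := by
      apply SimplexCategory.Hom.ext
      apply OrderHom.ext
      funext k
      apply h
      rw [e, e]
      exact congrArg _ hfg
    cases f; cases g; cases hd; rfl
  exact NatTrans.mono_of_mono_app _


lemma not_isDegenerate_map {B A : SSet.{u}} (f : B ⟶ A) (hf : Mono f) {n : ℕ} (x : B _⦋n⦌)
    (hx : ¬ B.IsDegenerate x) : ¬ A.IsDegenerate (f.app (op ⦋n⦌) x) := by
  rintro ⟨m, hm, σ, y, hσ, hy⟩
  haveI := hσ
  haveI : IsSplitEpi σ := isSplitEpi_of_epi σ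
  set δ : (⦋m⦌ : SimplexCategory) ⟶ ⦋n⦌ := section_ σ with hδdef
  have hδ : δ ≫ σ = 𝟙 _ := IsSplitEpi.id σ
  have hinj : Function.Injective (f.app (op ⦋n⦌)) := by
    have := (NatTrans.mono_iff_mono_app f).1 hf (op ⦋n⦌)
    rwa [CategoryTheory.mono_iff_injective] at this
  have hy' : y = f.app (op ⦋m⦌) (B.map δ.op x) := by
    rw [FunctorToTypes.naturality, hy, ← FunctorToTypes.map_comp_apply, ← op_comp, hδ]
    simp
  apply hx
  refine ⟨m, hm, σ, B.map δ.op x, hσ, hinj ?_⟩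
  rw [FunctorToTypes.naturality, ← hy', hy]

lemma nonSingular_of_mono {B A : SSet.{u}} (f : B ⟶ A) (hf : Mono f) (hA : A.NonSingular) :
    B.NonSingular := by
  intro n x hx
  have h1 : Mono ((SSet.yonedaEquiv (X := A) (n := ⦋n⦌)).symm (f.app (op ⦋n⦌) x)) :=
    hA n _ (not_isDegenerate_map f hf x hx)
  have h2 : (SSet.yonedaEquiv (X := A) (n := ⦋n⦌)).symm (f.app (op ⦋n⦌) x) = (SSet.yonedaEquiv (X := B) (n := ⦋n⦌)).symm x ≫ f := by
    apply NatTrans.ext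
    funext m
    ext t
    exact (NatTrans.naturality_apply f _ _).symm
  rw [h2] at h1
  exact mono_of_mono _ f

lemma fixed_of_vertex_eq {A : SSet.{u}} (hA : A.NonSingular) {n : ℕ} (a : A _⦋n + 1⦌)
    (l : Fin (n + 1)) (j : Fin (n + 2)) (hlj : l.castSucc < j)
    (hv : A.vertex a l.castSucc = A.vertex a j) :
    A.map (SimplexCategory.σ l ≫ SimplexCategory.δ l.succ).op a = a := by
  obtain ⟨m, σ', y, hσ', hy, rfl⟩ := exists_nondeg A (n + 1) a
  have hinj := vertex_injective_of_mono A y (hA m y hy)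
  rw [vertex_map, vertex_map] at hv
  have h1 := hinj hv
  have h2 : σ'.toOrderHom l.castSucc = σ'.toOrderHom l.succ := by
    refine le_antisymm (σ'.toOrderHom.monotone (Fin.castSucc_lt_succ (i := l)).le) ?_
    rw [h1]
    exact σ'.toOrderHom.monotone ((Fin.castSucc_lt_iff_succ_le).1 hlj)
  obtain ⟨τ, hτ⟩ := SimplexCategory.eq_σ_comp_of_not_injective' σ' l h2
  rw [← FunctorToTypes.map_comp_apply, ← op_comp]
  rw [hτ, ← Category.assoc, Category.assoc (SimplexCategory.σ l), δ_comp_σ_succ,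
    Category.comp_id]


lemma closed (J : Type u) [Category.{u} J] :
    ∀ (F : J ⥤ SSet.{u}) (c : Cone F), IsLimit c → (∀ j, SSet.NonSingular (F.obj j)) →
      SSet.NonSingular c.pt := by
  intro F c hc hF
  intro n x hx
  apply mono_of_vertex_injective
  have key : ∀ (i j : Fin (n + 1)), i < j → c.pt.vertex x i = c.pt.vertex x j → False := by
    intro i j hij hv
    match n, x, i, j, hij, hv with
    | 0, x, i, j, hij, hv =>
      have h0 : j.val < 1 := j.isLt
      have h1 : i.val < j.val := hij
      omega
    | (k + 1 : ℕ), x, i, j, hij, hv =>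
      have hil : i ≠ Fin.last _ := Fin.ne_last_of_lt hij
      set l : Fin (k + 1) := i.castPred hil with hl
      have hcast : l.castSucc = i := Fin.castSucc_castPred i hil
      have hlj : l.castSucc < j := by rw [hcast]; exact hij
      set g : (⦋k + 1⦌ : SimplexCategory) ⟶ ⦋k + 1⦌ :=
        SimplexCategory.σ l ≫ SimplexCategory.δ l.succ with hg
      have hfix : ∀ t : J, (F.obj t).map g.op ((c.π.app t).app (op ⦋k + 1⦌) x)
          = (c.π.app t).app (op ⦋k + 1⦌) x := by
        intro t
        apply fixed_of_vertex_eq (hF t) _ l j hlj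
        have hnat := fun i => vertex_naturality (X := c.pt) (Y := F.obj t) (c.π.app t) x i
        rw [hcast, hnat, hnat, hv]
      have hgx : c.pt.map g.op x = x := by
        apply (Types.isLimitEquivSections (isLimitOfPreserves
          ((evaluation SimplexCategoryᵒᵖ (Type u)).obj (op ⦋k + 1⦌)) hc)).injective
        apply Subtype.ext
        funext t
        rw [Types.isLimitEquivSections_apply, Types.isLimitEquivSections_apply]
        exact (NatTrans.naturality_apply (c.π.app t) g.op x).trans (hfix t)
      apply hx
      refine ⟨k, Nat.lt_succ_self k, SimplexCategory.σ l,
        c.pt.map (SimplexCategory.δ l.succ).op x, inferInstance, ?_⟩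
      conv_lhs => rw [← hgx]
      rw [hg, op_comp, FunctorToTypes.map_comp_apply]
  intro i j hv
  rcases lt_trichotomy i j with h | h | h
  · exact absurd hv (fun hv => key i j h hv)
  · exact h
  · exact absurd hv.symm (fun hv => key j i h hv)


instance closed_inst (J : Type u) [Category.{u} J] :
    ObjectProperty.IsClosedUnderLimitsOfShape SSet.NonSingular.{u} J :=
  ⟨fun X ⟨h⟩ => closed J h.diag ⟨X, h.π⟩ h.isLimit h.prop_diag_obj⟩

def QCong (X : SSet.{u}) (r : ∀ k : SimplexCategoryᵒᵖ, X.obj k → X.obj k → Prop) : Prop :=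
  ∀ ⦃k l : SimplexCategoryᵒᵖ⦄ (f : k ⟶ l), ∀ ⦃a b : X.obj k⦄, r k a b → r l (X.map f a) (X.map f b)

def quotObj (X : SSet.{u}) (r : ∀ k : SimplexCategoryᵒᵖ, X.obj k → X.obj k → Prop)
    (hr : QCong X r) : SSet.{u} where
  obj k := Quot (r k)
  map f := TypeCat.ofHom (Quot.map (X.map f) (hr f))
  map_id k := by
    ext q
    induction q using Quot.ind with
    | _ a =>
      show Quot.mk _ (X.map (𝟙 k) a) = Quot.mk _ a
      rw [FunctorToTypes.map_id_apply]
  map_comp f g := by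
    ext q
    induction q using Quot.ind with
    | _ a =>
      show Quot.mk _ (X.map (f ≫ g) a) = Quot.mk _ (X.map g (X.map f a))
      rw [FunctorToTypes.map_comp_apply]

def quotMk (X : SSet.{u}) (r : ∀ k : SimplexCategoryᵒᵖ, X.obj k → X.obj k → Prop)
    (hr : QCong X r) : X ⟶ quotObj X r hr where
  app k := TypeCat.ofHom (Quot.mk _)
  naturality k l f := rfl

def kerRel {X A : SSet.{u}} (h : X ⟶ A) (k : SimplexCategoryᵒᵖ) :
    X.obj k → X.obj k → Prop := fun a b => h.app k a = h.app k b

lemma kerRel_cong {X A : SSet.{u}} (h : X ⟶ A) : QCong X (kerRel h) := by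
  intro k l f a b hab
  show h.app l (X.map f a) = h.app l (X.map f b)
  rw [FunctorToTypes.naturality, FunctorToTypes.naturality, hab]

def quotDesc {X A : SSet.{u}} (h : X ⟶ A) : quotObj X (kerRel h) (kerRel_cong h) ⟶ A where
  app k := TypeCat.ofHom (Quot.lift (h.app k) (fun _ _ hab => hab))
  naturality k l f := by
    ext q
    induction q using Quot.ind with
    | _ a => exact NatTrans.naturality_apply h f a

lemma quotDesc_mono {X A : SSet.{u}} (h : X ⟶ A) : Mono (quotDesc h) := by
  have : ∀ k, Mono ((quotDesc h).app k) := by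
    intro k
    rw [CategoryTheory.mono_iff_injective]
    intro q q'
    induction q using Quot.ind with
    | _ a =>
      induction q' using Quot.ind with
      | _ b => exact fun hab => Quot.sound hab
  exact NatTrans.mono_of_mono_app _

lemma solutionSet :
    SolutionSetCondition.{u} (ObjectProperty.ι SSet.NonSingular.{u}) := by
  intro X
  refine ⟨{p : ∀ k : SimplexCategoryᵒᵖ, X.obj k → X.obj k → Prop //
      ∃ H : QCong X p, SSet.NonSingular (quotObj X p H)},
    fun i => ⟨quotObj X i.1 i.2.choose, i.2.choose_spec⟩,
    fun i => quotMk X i.1 i.2.choose, ?_⟩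
  intro A h
  have hns : SSet.NonSingular (quotObj X (kerRel h) (kerRel_cong h)) :=
    nonSingular_of_mono (quotDesc h) (quotDesc_mono h) A.2
  refine ⟨⟨kerRel h, kerRel_cong h, hns⟩, ObjectProperty.homMk (quotDesc h), ?_⟩
  apply NatTrans.ext
  funext k
  ext a
  rfl


instance : HasLimits (ObjectProperty.FullSubcategory SSet.NonSingular.{u}) :=
  { has_limits_of_shape := fun J _ => hasLimitsOfShape_of_closedUnderLimits J _ }

noncomputable instance : CreatesLimits (ObjectProperty.ι SSet.NonSingular.{u}) :=
  { CreatesLimitsOfShape := fun {J} _ => createsLimitsOfShapeFullSubcategoryInclusion J _ }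

noncomputable instance : PreservesLimits (ObjectProperty.ι SSet.NonSingular.{u}) :=
  preservesLimits_of_createsLimits_and_hasLimits _

noncomputable instance : Reflective (ObjectProperty.ι SSet.NonSingular.{u}) := by
  haveI : (ObjectProperty.ι SSet.NonSingular.{u}).IsRightAdjoint :=
    isRightAdjoint_of_preservesLimits_of_solutionSetCondition _ solutionSet
  exact
    { L := (ObjectProperty.ι SSet.NonSingular.{u}).leftAdjoint
      adj := Adjunction.ofIsRightAdjoint _ }

end NSTest

/-- The full subcategory of `SSet` spanned by the non-singular simplicial sets is
bicomplete: it has all small limits and all small colimits. -/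
theorem nonsingular_bicomplete :
    HasLimits (ObjectProperty.FullSubcategory SSet.NonSingular) ∧
      HasColimits (ObjectProperty.FullSubcategory SSet.NonSingular) :=
  ⟨inferInstance, hasColimits_of_reflective (ObjectProperty.ι SSet.NonSingular)⟩
end

section
/- For any family (Aᵢ)_{i ∈ I} of non-singular simplicial sets indexed by a (small) type I, the product ∏ᵢ Aᵢ in the category SSet is a non-singular simplicial set. -/
open CategoryTheory CategoryTheory.Limits Simplicial SSet

namespace NonsingularPiAux

open SimplexCategory

lemma vertex_map (X : SSet) {n m : ℕ} (τ : (⦋n⦌ : SimplexCategory) ⟶ ⦋m⦌) (z : X _⦋m⦌)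
    (j : Fin (n + 1)) :
    X.vertex (X.map τ.op z) j = X.vertex z (τ.toOrderHom j) := by
  dsimp [SSet.vertex]
  rw [← FunctorToTypes.map_comp_apply, ← op_comp, SimplexCategory.const_comp]

/-- Weak Eilenberg–Zilber: every simplex is the image of a non-degenerate simplex. -/
lemma exists_nonDeg (X : SSet) : ∀ (n : ℕ) (x : X _⦋n⦌),
    ∃ (m : ℕ) (τ : (⦋n⦌ : SimplexCategory) ⟶ ⦋m⦌) (z : X _⦋m⦌),
      ¬ X.IsDegenerate z ∧ x = X.map τ.op z := by
  intro n
  induction n using Nat.strong_induction_on with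
  | _ n ih =>
    intro x
    by_cases hx : X.IsDegenerate x
    · obtain ⟨m, hm, τ, y, _, rfl⟩ := hx
      obtain ⟨k, ρ, z, hz, rfl⟩ := ih m hm y
      exact ⟨k, τ ≫ ρ, z, hz, by rw [op_comp, FunctorToTypes.map_comp_apply]⟩
    · exact ⟨n, 𝟙 _, x, hx, by simp⟩

lemma symm_app {X : SSet} {n : ℕ} (x : X _⦋n⦌) (m : SimplexCategoryᵒᵖ)
    (g : Δ[n].obj m) :
    ((SSet.yonedaEquiv (X := X) (n := ⦋n⦌)).symm x).app m g = X.map g.down.op x := rfl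

/-- In a non-singular simplicial set, non-degenerate simplices have distinct vertices. -/
lemma vertex_injective {X : SSet} (hX : X.NonSingular) {m : ℕ} {z : X _⦋m⦌}
    (hz : ¬ X.IsDegenerate z) : Function.Injective (X.vertex z) := by
  have hmono := hX m z hz
  rw [NatTrans.mono_iff_mono_app] at hmono
  have h0 := hmono (Opposite.op ⦋0⦌)
  rw [CategoryTheory.mono_iff_injective] at h0
  intro p q hpq
  have : (ULift.up (const ⦋0⦌ ⦋m⦌ p) : Δ[m].obj (Opposite.op ⦋0⦌)) = ULift.up (const ⦋0⦌ ⦋m⦌ q) :=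
    h0 (by exact hpq)
  have := congrArg (fun g => g.down.toOrderHom 0) this
  simpa using this

/-- Simplices with injective vertex function represent monomorphisms. -/
lemma mono_of_vertex_injective {X : SSet} {n : ℕ} {x : X _⦋n⦌}
    (hv : Function.Injective (X.vertex x)) : Mono ((SSet.yonedaEquiv (X := X) (n := ⦋n⦌)).symm x) := by
  rw [NatTrans.mono_iff_mono_app]
  intro m
  rw [CategoryTheory.mono_iff_injective]
  intro g g' hgg'
  rw [symm_app, symm_app] at hgg'
  have e : ∀ (gg : m.unop ⟶ ⦋n⦌) (j : Fin (m.unop.len + 1)),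
      X.vertex x (gg.toOrderHom j) =
        X.map (SimplexCategory.const ⦋0⦌ m.unop j).op (X.map gg.op x) := by
    intro gg j
    dsimp [SSet.vertex]
    rw [← FunctorToTypes.map_comp_apply, ← op_comp, SimplexCategory.const_comp]
  have key : ∀ (j : Fin (m.unop.len + 1)), g.down.toOrderHom j = g'.down.toOrderHom j := by
    intro j
    apply hv
    rw [e, e, hgg']
  obtain ⟨g⟩ := g
  obtain ⟨g'⟩ := g'
  congr 1
  exact SimplexCategory.Hom.ext _ _ (OrderHom.ext _ _ (funext key))

/-- Key step: in a non-singular simplicial set, if two distinct vertices of a simplex agree,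
the simplex is fixed by `σ a ≫ δ a.succ`. -/
lemma map_comp_self {X : SSet} (hX : X.NonSingular) {n : ℕ} (x : X _⦋n + 1⦌) (a : Fin (n + 1))
    (b : Fin (n + 2)) (hab : a.castSucc < b)
    (h : X.vertex x a.castSucc = X.vertex x b) :
    X.map (SimplexCategory.σ a ≫ SimplexCategory.δ a.succ).op x = x := by
  obtain ⟨m, τ, z, hz, rfl⟩ := exists_nonDeg X (n + 1) x
  have hinj := vertex_injective hX hz
  have hab' : τ.toOrderHom a.castSucc = τ.toOrderHom b := by
    apply hinj
    rw [← vertex_map, ← vertex_map]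
    exact h
  have hsq : τ.toOrderHom a.succ = τ.toOrderHom a.castSucc := by
    refine le_antisymm ?_ (τ.toOrderHom.monotone a.castSucc_le_succ)
    rw [hab']
    exact τ.toOrderHom.monotone (Fin.castSucc_lt_iff_succ_le.mp hab)
  have key : (SimplexCategory.σ a ≫ SimplexCategory.δ a.succ) ≫ τ = τ := by
    apply SimplexCategory.Hom.ext
    apply OrderHom.ext
    funext j
    show τ.toOrderHom ((a.succ).succAbove (a.predAbove j)) = τ.toOrderHom j
    rcases le_or_gt j a.castSucc with hj | hj
    · have hne : j ≠ Fin.last (n + 1) := by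
        intro hjl
        have := a.castSucc_lt_last
        rw [hjl] at hj
        exact absurd (lt_of_le_of_lt hj this) (lt_irrefl _)
      rw [Fin.predAbove_of_le_castSucc _ _ hj,
        Fin.succAbove_of_castSucc_lt _ _ (by
          rw [Fin.castSucc_castPred]
          exact lt_of_le_of_lt hj (Fin.castSucc_lt_succ (i := a))),
        Fin.castSucc_castPred]
    · have hne : j ≠ 0 := Fin.ne_zero_of_lt hj
      rw [Fin.predAbove_of_castSucc_lt _ _ hj]
      rcases eq_or_lt_of_le (Fin.castSucc_lt_iff_succ_le.mp hj) with hja | hja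
      · have hpred : j.pred hne = a := by
          have := congrArg Fin.val hja
          simp only [Fin.val_succ] at this
          ext
          rw [Fin.coe_pred]
          omega
        rw [hpred, Fin.succAbove_of_castSucc_lt _ _ (Fin.castSucc_lt_succ (i := a)), ← hja, hsq]
      · rw [Fin.succAbove_of_le_castSucc, Fin.succ_pred]
        rw [Fin.le_castSucc_iff, Fin.succ_pred]
        exact hja
  conv_rhs => rw [← key]
  rw [← FunctorToTypes.map_comp_apply, ← op_comp]

lemma yonedaEquiv_comp {k : ℕ} {X Y : SSet.{0}} (f : Δ[k] ⟶ X) (g : X ⟶ Y) :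
    SSet.yonedaEquiv (X := Y) (n := ⦋k⦌) (f ≫ g) = g.app _ (SSet.yonedaEquiv (X := X) (n := ⦋k⦌) f) := rfl

/-- Elements of a product of simplicial sets are determined by their projections. -/
lemma pi_ext {I : Type} (A : I → SSet.{0}) {k : ℕ} (a b : (∏ᶜ A).obj (Opposite.op ⦋k⦌))
    (hab : ∀ i, (Pi.π A i).app _ a = (Pi.π A i).app _ b) : a = b := by
  apply ((SSet.yonedaEquiv (X := ∏ᶜ A) (n := ⦋k⦌)).symm.injective)
  apply Pi.hom_ext
  intro i
  apply (SSet.yonedaEquiv (X := A i) (n := ⦋k⦌)).injective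
  rw [yonedaEquiv_comp, yonedaEquiv_comp, Equiv.apply_symm_apply, Equiv.apply_symm_apply]
  exact hab i

lemma vertex_naturality {X Y : SSet} (g : X ⟶ Y) {n : ℕ} (x : X _⦋n⦌) (j : Fin (n + 1)) :
    Y.vertex (g.app _ x) j = g.app _ (X.vertex x j) :=
  (FunctorToTypes.naturality g _ x).symm

end NonsingularPiAux

open NonsingularPiAux SimplexCategory in
/-- A product of non-singular simplicial sets is non-singular. -/
theorem nonsingular_pi {I : Type} (A : I → SSet.{0}) (h : ∀ i, (A i).NonSingular) :
    SSet.NonSingular (∏ᶜ A) := by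
  intro n x hx
  apply mono_of_vertex_injective
  have H : ∀ (a b : Fin (n + 1)), a < b → (∏ᶜ A).vertex x a = (∏ᶜ A).vertex x b → False := by
    intro a b h' hab
    obtain ⟨k, rfl⟩ : ∃ k, n = k + 1 := ⟨n - 1, by have hb := b.isLt; omega⟩
    have ha : a.val < k + 1 := by have hb := b.isLt; omega
    set a' : Fin (k + 1) := ⟨a.val, ha⟩ with ha'
    have haa : a = a'.castSucc := by ext; rfl
    have hcomp : ∀ i, (A i).map (SimplexCategory.σ a' ≫ SimplexCategory.δ a'.succ).op
        ((Pi.π A i).app _ x) = (Pi.π A i).app _ x := by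
      intro i
      apply map_comp_self (h i) _ a' b (haa ▸ h')
      rw [← haa, vertex_naturality, vertex_naturality, hab]
    have hmapx : (∏ᶜ A).map (SimplexCategory.σ a' ≫ SimplexCategory.δ a'.succ).op x = x := by
      apply pi_ext
      intro i
      rw [FunctorToTypes.naturality]
      exact hcomp i
    exact hx ⟨k, Nat.lt_succ_self k, SimplexCategory.σ a',
      (∏ᶜ A).map (SimplexCategory.δ a'.succ).op x, inferInstance,
      by rw [← FunctorToTypes.map_comp_apply, ← op_comp]; exact hmapx.symm⟩
  intro a b hab
  by_contra hne
  rcases Ne.lt_or_gt hne with h' | h'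
  · exact H a b h' hab
  · exact H b a h' hab.symm
end

section
/- Let X be a simplicial set and x an n-simplex of X. Then the equivalence relation Rₓ on Fin (n+1) generated by ≈ₓ has the following interval property: if Rₓ relates i and j and if i ≤ k ≤ j in Fin (n+1), then Rₓ relates i and k. -/
open CategoryTheory CategoryTheory.Limits Simplicial SSet

theorem vertexRel_aux (X : SSet) {n : ℕ} (x : X _⦋n⦌) :
    ∀ a b, X.vertexRel x a b → ∀ c : Fin (n + 1), min a b ≤ c → c ≤ max a b →
      X.vertexRel x a c := by
  intro a b h
  induction h with
  | rel a b hab =>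
    intro c h1 h2
    obtain ⟨j, hab', hbj, hv⟩ := hab
    refine Relation.EqvGen.rel _ _ ⟨j, ?_, ?_, hv⟩
    · simp only [Fin.le_def, Fin.lt_def, min_def, max_def] at *
      split_ifs at h1 h2 <;> omega
    · simp only [Fin.le_def, Fin.lt_def, min_def, max_def] at *
      split_ifs at h1 h2 <;> omega
  | refl a =>
    intro c h1 h2
    simp only [min_self, max_self] at h1 h2
    obtain rfl : a = c := le_antisymm h1 h2
    exact Relation.EqvGen.refl a
  | symm a b h ih =>
    intro c h1 h2
    rw [min_comm] at h1
    rw [max_comm] at h2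
    exact Relation.EqvGen.trans _ _ _ (Relation.EqvGen.symm _ _ h) (ih c h1 h2)
  | trans a b c h1 h2 ih1 ih2 =>
    intro d hd1 hd2
    by_cases hcase : min a b ≤ d ∧ d ≤ max a b
    · exact ih1 d hcase.1 hcase.2
    · have hb1 : min b c ≤ d := by
        simp only [Fin.le_def, min_def, max_def] at *
        split_ifs at * <;> omega
      have hb2 : d ≤ max b c := by
        simp only [Fin.le_def, min_def, max_def] at *
        split_ifs at * <;> omega
      exact Relation.EqvGen.trans _ _ _ h1 (ih2 d hb1 hb2)

/-- The equivalence relation `Rₓ` generated by `≈ₓ` has the interval property. -/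
theorem vertexRel_interval (X : SSet) {n : ℕ} (x : X _⦋n⦌) (i j k : Fin (n + 1))
    (hij : X.vertexRel x i j) (hik : i ≤ k) (hkj : k ≤ j) :
    X.vertexRel x i k := by
  have h1 : min i j ≤ k := le_trans (min_le_left _ _) hik
  have h2 : k ≤ max i j := le_trans hkj (le_max_right _ _)
  exact vertexRel_aux X x i j hij k h1 h2
end

section
/- Let X be a simplicial set and x an n-simplex of X. The simplicial map Δ[n] ⟶ X representing x (corresponding to x under the Yoneda equivalence) is a monomorphism if and only if the vertices of x are pairwise distinct, i.e. the function Fin (n+1) → X₀ given by i ↦ x·εᵢ is injective. -/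
open CategoryTheory CategoryTheory.Limits Simplicial SSet

/-- The representing map of a simplex is a monomorphism iff its vertices are
pairwise distinct. -/
theorem mono_representing_iff_vertices_injective (X : SSet) {n : ℕ} (x : X _⦋n⦌) :
    Mono ((SSet.yonedaEquiv (X := X) (n := ⦋n⦌)).symm x) ↔ Function.Injective (X.vertex x) := by
  have happ : ∀ (m : SimplexCategoryᵒᵖ) (f : Δ[n].obj m),
      ((SSet.yonedaEquiv (X := X) (n := ⦋n⦌)).symm x).app m f = X.map f.down.op x := fun _ _ => rfl
  constructor
  · intro hmono i j hij
    rw [NatTrans.mono_iff_mono_app] at hmono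
    have := hmono (Opposite.op ⦋0⦌)
    rw [mono_iff_injective] at this
    have h : (ULift.up (SimplexCategory.const ⦋0⦌ ⦋n⦌ i) : Δ[n].obj (Opposite.op ⦋0⦌))
        = ULift.up (SimplexCategory.const ⦋0⦌ ⦋n⦌ j) := this hij
    have := congrArg (fun f => SimplexCategory.Hom.toOrderHom f.down 0) h
    simpa using this
  · intro hinj
    rw [NatTrans.mono_iff_mono_app]
    intro m
    rw [mono_iff_injective]
    intro f g hfg
    rw [happ, happ] at hfg
    apply ULift.ext
    apply SimplexCategory.Hom.ext
    apply OrderHom.ext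
    funext i
    apply hinj
    have h1 : X.vertex x (f.down.toOrderHom i)
        = X.map (SimplexCategory.const ⦋0⦌ m.unop i ≫ f.down).op x := by
      rw [SimplexCategory.const_comp]; rfl
    have h2 : X.vertex x (g.down.toOrderHom i)
        = X.map (SimplexCategory.const ⦋0⦌ m.unop i ≫ g.down).op x := by
      rw [SimplexCategory.const_comp]; rfl
    rw [h1, h2]; simp only [op_comp, FunctorToTypes.map_comp_apply, hfg]
end

section
/- Let f : X ⟶ A be a simplicial map whose target A is non-singular, let x be an n-simplex of X, and write f(x) = A.map σ.op z where z is a non-degenerate m-simplex of A and σ : [n] ⟶ [m] is an epimorphism of the simplex category (the Eilenberg–Zilber decomposition of f(x)). Then for all i, j ∈ Fin (n+1): if the equivalence relation Rₓ generated by ≈ₓ relates i and j, then σ i = σ j. -/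
open CategoryTheory CategoryTheory.Limits Simplicial SSet

/-- If `f : X ⟶ A` has non-singular target and `f(x) = A.map σ.op z` is the
Eilenberg–Zilber decomposition of `f(x)`, then `σ` identifies any two indices
related by `Rₓ`. -/
theorem ez_degeneracy_coarser_than_vertexRel {X A : SSet} (f : X ⟶ A) (hA : A.NonSingular)
    {n m : ℕ} (x : X _⦋n⦌) (σ : (⦋n⦌ : SimplexCategory) ⟶ ⦋m⦌) (z : A _⦋m⦌)
    (hσ : Epi σ) (hz : ¬ A.IsDegenerate z)
    (hfx : f.app (Opposite.op ⦋n⦌) x = A.map σ.op z)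
    (i j : Fin (n + 1)) (hij : X.vertexRel x i j) :
    σ.toOrderHom i = σ.toOrderHom j := by
  have base : ∀ i j : Fin (n + 1), X.vertex x i = X.vertex x j →
      σ.toOrderHom i = σ.toOrderHom j := by
    intro i j hv
    have hmono := hA m z hz
    rw [NatTrans.mono_iff_mono_app] at hmono
    have hinj : Function.Injective (((SSet.yonedaEquiv (X := A) (n := ⦋m⦌)).symm z).app (Opposite.op ⦋0⦌)) :=
      (mono_iff_injective _).mp (hmono _)
    have hij' : A.vertex (f.app (Opposite.op ⦋n⦌) x) i
        = A.vertex (f.app (Opposite.op ⦋n⦌) x) j := by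
      dsimp only [SSet.vertex]
      rw [← FunctorToTypes.naturality, ← FunctorToTypes.naturality]
      exact congrArg _ hv
    rw [hfx] at hij'
    have e : ∀ k : Fin (n+1), A.map (SimplexCategory.const ⦋0⦌ ⦋n⦌ k).op (A.map σ.op z)
        = A.map (SimplexCategory.const ⦋0⦌ ⦋m⦌ (σ.toOrderHom k)).op z := by
      intro k
      rw [← FunctorToTypes.map_comp_apply, ← op_comp, SimplexCategory.const_comp]
    have hz' : A.map (SimplexCategory.const ⦋0⦌ ⦋m⦌ (σ.toOrderHom i)).op z
        = A.map (SimplexCategory.const ⦋0⦌ ⦋m⦌ (σ.toOrderHom j)).op z := by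
      rw [← e, ← e]; exact hij'
    have heq := hinj (a₁ := ULift.up (SimplexCategory.const ⦋0⦌ ⦋m⦌ (σ.toOrderHom i)))
      (a₂ := ULift.up (SimplexCategory.const ⦋0⦌ ⦋m⦌ (σ.toOrderHom j))) hz'
    have := congrArg (fun g => SimplexCategory.Hom.toOrderHom (ULift.down g) 0) heq
    simpa using this
  have step : ∀ i k : Fin (n + 1), X.approxRel x i k →
      σ.toOrderHom i = σ.toOrderHom k := by
    rintro i k ⟨j, hik, hkj, hv⟩
    have h1 : σ.toOrderHom i = σ.toOrderHom j := base i j hv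
    exact le_antisymm (σ.toOrderHom.monotone hik)
      (h1 ▸ σ.toOrderHom.monotone hkj)
  induction hij with
  | rel a b h => exact step a b h
  | refl a => rfl
  | symm a b _ ih => exact ih.symm
  | trans a b c _ _ ih1 ih2 => exact ih1.trans ih2
end

section
/- Let f : X ⟶ A be a simplicial map whose target A is non-singular, let x be an n-simplex of X, and let ρ : [n] ⟶ [m] be an enforcer of x. Then there exists an m-simplex w of A such that f(x) = A.map ρ.op w; equivalently, the representing map Δ[n] ⟶ A of f(x) factors through the map Δ[n] ⟶ Δ[m] induced by ρ. -/
open CategoryTheory CategoryTheory.Limits Simplicial SSet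

-- aux: vertex of a pushforward along σ
lemma vertex_map (A : SSet) {n k : ℕ} (σ : (⦋n⦌ : SimplexCategory) ⟶ ⦋k⦌) (z : A _⦋k⦌)
    (i : Fin (n + 1)) : A.vertex (A.map σ.op z) i = A.vertex z (σ.toOrderHom i) := by
  dsimp [SSet.vertex]
  rw [← FunctorToTypes.map_comp_apply, ← op_comp, SimplexCategory.const_comp]

-- aux: Eilenberg–Zilber-style decomposition
lemma exists_nondeg (A : SSet) (n : ℕ) (a : A _⦋n⦌) :
    ∃ (k : ℕ) (σ : (⦋n⦌ : SimplexCategory) ⟶ ⦋k⦌) (z : A _⦋k⦌),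
      Epi σ ∧ ¬ A.IsDegenerate z ∧ a = A.map σ.op z := by
  induction n using Nat.strong_induction_on with
  | _ n ih =>
    by_cases h : A.IsDegenerate a
    · obtain ⟨m, hm, σ, y, hσ, hy⟩ := h
      obtain ⟨k, τ, z, hτ, hz, hyz⟩ := ih m hm y
      exact ⟨k, σ ≫ τ, z, epi_comp _ _, hz, by
        rw [hy, hyz, op_comp, FunctorToTypes.map_comp_apply]⟩
    · exact ⟨n, 𝟙 _, a, inferInstance, h, by simp⟩

-- aux: vertices of a nondegenerate simplex in a nonsingular sset are distinct
lemma vertex_inj {A : SSet} (hA : A.NonSingular) {k : ℕ} {z : A _⦋k⦌}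
    (hz : ¬ A.IsDegenerate z) {a b : Fin (k + 1)}
    (h : A.vertex z a = A.vertex z b) : a = b := by
  have hm := hA k z hz
  rw [NatTrans.mono_iff_mono_app] at hm
  have hm0 := hm (Opposite.op ⦋0⦌)
  rw [mono_iff_injective] at hm0
  have h' : ((SSet.yonedaEquiv (X := A) (n := ⦋k⦌)).symm z).app (Opposite.op ⦋0⦌)
      (ULift.up (SimplexCategory.const ⦋0⦌ ⦋k⦌ a))
      = ((SSet.yonedaEquiv (X := A) (n := ⦋k⦌)).symm z).app (Opposite.op ⦋0⦌)
      (ULift.up (SimplexCategory.const ⦋0⦌ ⦋k⦌ b)) := h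
  have := hm0 h'
  have := congrArg (fun g => (SimplexCategory.Hom.toOrderHom g.down) 0) this
  simpa using this

/-- If `f : X ⟶ A` has non-singular target and `ρ` is an enforcer of `x`, then
`f(x)` factors through `ρ`. -/
theorem factor_through_enforcer {X A : SSet} (f : X ⟶ A) (hA : A.NonSingular)
    {n m : ℕ} (x : X _⦋n⦌) (ρ : (⦋n⦌ : SimplexCategory) ⟶ ⦋m⦌) (hρ : Epi ρ)
    (henf : ∀ i j, ρ.toOrderHom i = ρ.toOrderHom j ↔ X.vertexRel x i j) :
    ∃ w : A _⦋m⦌, f.app (Opposite.op ⦋n⦌) x = A.map ρ.op w := by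
  obtain ⟨k, σ, z, hσ, hz, hdec⟩ := exists_nondeg A n (f.app (Opposite.op ⦋n⦌) x)
  -- vertices of f(x)
  have hvfx : ∀ i, A.vertex (f.app (Opposite.op ⦋n⦌) x) i = A.vertex z (σ.toOrderHom i) := by
    intro i; rw [hdec, vertex_map]
  have hvnat : ∀ i, A.vertex (f.app (Opposite.op ⦋n⦌) x) i
      = f.app (Opposite.op ⦋0⦌) (X.vertex x i) := by
    intro i
    dsimp [SSet.vertex]
    exact (FunctorToTypes.naturality f _ x).symm
  -- σ is constant on vertexRel classes
  have hconst : ∀ i j, X.vertexRel x i j → σ.toOrderHom i = σ.toOrderHom j := by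
    intro i j h
    induction h with
    | rel i kk h =>
      obtain ⟨j, hik, hkj, hv⟩ := h
      have hij : σ.toOrderHom i = σ.toOrderHom j := by
        apply vertex_inj hA hz
        rw [← hvfx, ← hvfx, hvnat, hvnat, hv]
      have h1 : σ.toOrderHom i ≤ σ.toOrderHom kk := σ.toOrderHom.monotone hik
      have h2 : σ.toOrderHom kk ≤ σ.toOrderHom j := σ.toOrderHom.monotone hkj
      exact le_antisymm (h1) (hij ▸ h2) |>.symm ▸ rfl
    | refl => rfl
    | symm _ _ _ h => exact h.symm
    | trans _ _ _ _ _ h1 h2 => exact h1.trans h2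
  have hfac : ∀ i j : Fin (n + 1), ρ.toOrderHom i = ρ.toOrderHom j →
      σ.toOrderHom i = σ.toOrderHom j :=
    fun i j h => hconst i j ((henf i j).mp h)
  have hsplit : IsSplitEpi ρ := isSplitEpi_of_epi ρ
  refine ⟨A.map (section_ ρ ≫ σ).op z, ?_⟩
  rw [hdec, ← FunctorToTypes.map_comp_apply, ← op_comp]
  have hcomp : ρ ≫ (section_ ρ ≫ σ) = σ := by
    apply SimplexCategory.Hom.ext
    apply OrderHom.ext
    funext i
    apply hfac
    have := IsSplitEpi.id ρ
    exact congrArg (fun g => (SimplexCategory.Hom.toOrderHom g) (ρ.toOrderHom i)) this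
  rw [hcomp]
end

section
/- Let f : X ⟶ Y be a simplicial map, let x be an n-simplex of X, and write f(x) = Y.map σ.op y where y is a non-degenerate m-simplex of Y and σ : [n] ⟶ [m] is an epimorphism of the simplex category (the Eilenberg–Zilber decomposition of f(x)). Then for all i, j ∈ Fin (n+1): if the equivalence relation Rₓ generated by ≈ₓ relates i and j, then the equivalence relation R_y generated by ≈_y relates σ i and σ j. -/
open CategoryTheory CategoryTheory.Limits Simplicial SSet

/-- If `f(x) = Y.map σ.op y` is the Eilenberg–Zilber decomposition of `f(x)`, then
`σ` carries the equivalence relation `Rₓ` into `R_y`. -/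
theorem vertexRel_map {X Y : SSet} (f : X ⟶ Y) {n m : ℕ} (x : X _⦋n⦌)
    (σ : (⦋n⦌ : SimplexCategory) ⟶ ⦋m⦌) (y : Y _⦋m⦌) (hσ : Epi σ)
    (hy : ¬ Y.IsDegenerate y) (hfx : f.app (Opposite.op ⦋n⦌) x = Y.map σ.op y)
    (i j : Fin (n + 1)) (hij : X.vertexRel x i j) :
    Y.vertexRel y (σ.toOrderHom i) (σ.toOrderHom j) := by
  have key : ∀ i : Fin (n + 1), Y.vertex y (σ.toOrderHom i)
      = f.app (Opposite.op ⦋0⦌) (X.vertex x i) := by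
    intro i
    have h1 : f.app (Opposite.op ⦋0⦌) (X.vertex x i)
        = Y.map (SimplexCategory.const ⦋0⦌ ⦋n⦌ i).op (f.app (Opposite.op ⦋n⦌) x) :=
      FunctorToTypes.naturality f _ x
    rw [h1, hfx, ← FunctorToTypes.map_comp_apply, ← op_comp,
      SimplexCategory.const_comp]
    rfl
  have step : ∀ i k : Fin (n + 1), X.approxRel x i k →
      Y.approxRel y (σ.toOrderHom i) (σ.toOrderHom k) := by
    rintro i k ⟨j, hik, hkj, hv⟩
    exact ⟨σ.toOrderHom j, σ.toOrderHom.monotone hik, σ.toOrderHom.monotone hkj,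
      by rw [key, key, hv]⟩
  induction hij with
  | rel a b h => exact Relation.EqvGen.rel _ _ (step a b h)
  | refl a => exact Relation.EqvGen.refl _
  | symm a b _ ih => exact Relation.EqvGen.symm _ _ ih
  | trans a b c _ _ ih1 ih2 => exact Relation.EqvGen.trans _ _ _ ih1 ih2
end
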